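/- arXiv:1904.09322 — 10 statements merged into one kernel-verified Lean document; each statement's English description precedes it below -/
import Mathlib

section
/- Let C be an adhesive, balanced category with epi–mono factorizations and effective unions. Let a₁ : A ⟶ B₁ and a₂ : A ⟶ B₂ be monomorphisms, let (d₁ : B₁ ⟶ D, d₂ : B₂ ⟶ D) be a pushout cocone of the span (a₁, a₂), and let e₁ : B₁ ⟶ E, e₂ : B₂ ⟶ E be monomorphisms with e₁ ∘ a₁ = e₂ ∘ a₂, so that there is a unique morphism e : D ⟶ E with e ∘ d₁ = e₁ and e ∘ d₂ = e₂. Assume moreover that the exterior square e₁ ∘ a₁ = e₂ ∘ a₂ is a pullback. Then e is an epimorphism if and only if the exterior square is a pushout, i.e. (e₁, e₂) is a pushout cocone of the span (a₁, a₂). -/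
open CategoryTheory CategoryTheory.Limits

universe v u


/-- A category has *epi–mono factorizations* if every morphism factors as an epimorphism
followed by a monomorphism. -/
def HasEpiMonoFactorizations (𝒞 : Type u) [Category.{v} 𝒞] : Prop :=
  ∀ {X Y : 𝒞} (f : X ⟶ Y), ∃ (E : 𝒞) (e : X ⟶ E) (m : E ⟶ Y), Epi e ∧ Mono m ∧ e ≫ m = f

/-- A category has *effective unions* if for every pushout square of monomorphisms
`bc`, `e`, `f` and all monomorphisms `b`, `c` forming with `bc` a pullback
square, the unique mediating morphism `d` with `e ≫ d = b` and `f ≫ d = c` is a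
monomorphism. -/
def HasEffectiveUnions (𝒞 : Type u) [Category.{v} 𝒞] : Prop :=
  ∀ {A B C D E : 𝒞} (b' : A ⟶ B) (c' : A ⟶ C) (e : B ⟶ D) (f : C ⟶ D)
    (b : B ⟶ E) (c : C ⟶ E) (d : D ⟶ E),
    Mono b' → Mono c' → Mono e → Mono f → Mono b → Mono c →
    IsPushout b' c' e f → IsPullback b' c' b c →
    e ≫ d = b → f ≫ d = c → Mono d

/-- In an adhesive, balanced category with epi–mono factorizations and effective unions:
given a pushout `(d₁, d₂)` of a span of monomorphisms `(a₁, a₂)`, monomorphisms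
`e₁, e₂` with `e₁ ∘ a₁ = e₂ ∘ a₂` forming a pullback square, and the mediating morphism
`e : D ⟶ E`, the morphism `e` is an epimorphism if and only if the exterior square
`(e₁, e₂)` is a pushout of the span `(a₁, a₂)`. -/
theorem epi_mediating_iff_exterior_isPushout {𝒞 : Type u} [Category.{v} 𝒞]
    [Adhesive 𝒞] [Balanced 𝒞]
    (hfact : HasEpiMonoFactorizations 𝒞) (heu : HasEffectiveUnions 𝒞)
    {A B₁ B₂ D E : 𝒞}
    (a₁ : A ⟶ B₁) (a₂ : A ⟶ B₂) [Mono a₁] [Mono a₂]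
    (d₁ : B₁ ⟶ D) (d₂ : B₂ ⟶ D) (hpo : IsPushout a₁ a₂ d₁ d₂)
    (e₁ : B₁ ⟶ E) (e₂ : B₂ ⟶ E) [Mono e₁] [Mono e₂]
    (e : D ⟶ E) (he₁ : d₁ ≫ e = e₁) (he₂ : d₂ ≫ e = e₂)
    (hpb : IsPullback a₁ a₂ e₁ e₂) :
    Epi e ↔ IsPushout a₁ a₂ e₁ e₂ := by
  constructor
  · intro hepi
    have hm₁ : Mono d₁ := Adhesive.mono_of_isPushout_of_mono_right hpo
    have hm₂ : Mono d₂ := Adhesive.mono_of_isPushout_of_mono_left hpo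
    have hmono : Mono e := heu a₁ a₂ d₁ d₂ e₁ e₂ e inferInstance inferInstance hm₁ hm₂
      inferInstance inferInstance hpo hpb he₁ he₂
    have : IsIso e := isIso_of_mono_of_epi e
    exact hpo.of_iso (Iso.refl _) (Iso.refl _) (Iso.refl _) (asIso e)
      (by simp) (by simp) (by simpa using he₁) (by simpa using he₂)
  · intro h
    constructor
    intro Z u v huv
    apply h.hom_ext
    · rw [← he₁]; simpa using congrArg (d₁ ≫ ·) huv
    · rw [← he₂]; simpa using congrArg (d₂ ≫ ·) huv
end

section
/- Let C be an adhesive category with epi–mono factorizations and effective unions. Consider morphisms z : Z' ⟶ Z, w : Z ⟶ Y, w' : Z' ⟶ Y', y : Y' ⟶ Y with w ∘ z = y ∘ w' (top square), and v : Y ⟶ X, v' : Y' ⟶ X', x : X' ⟶ X with v ∘ y = x ∘ v' (bottom square). Assume that z, w, w', y, v', x and the composite v ∘ w are all monomorphisms, that the top square is a pushout (i.e. (w, y) is a pushout cocone of the span (z, w')), and that (x, v' ∘ w') is a final pullback complement of (v ∘ w, z). Then (x, v') is a final pullback complement of (v, y), and v is a monomorphism. -/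
open CategoryTheory CategoryTheory.Limits

universe v u


/-- Given morphisms `a : A ⟶ B` and `c : B ⟶ C`, the pair `(d : D ⟶ C, b : A ⟶ D)` is a
*final pullback complement* of `(c, a)` if the square `a ≫ c = b ≫ d` is a pullback and
for every pullback square `x ≫ c = y ≫ z` and every `w : P ⟶ A` with `w ≫ a = x`,
there is a unique `w* : Q ⟶ D` with `w* ≫ d = z` and `y ≫ w* = w ≫ b`. -/
structure IsFinalPullbackComplement {𝒞 : Type u} [Category.{v} 𝒞] {A B C D : 𝒞}
    (a : A ⟶ B) (c : B ⟶ C) (b : A ⟶ D) (d : D ⟶ C) : Prop where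
  isPullback : CategoryTheory.IsPullback a b c d
  universal : ∀ {P Q : 𝒞} (x : P ⟶ B) (y : P ⟶ Q) (z : Q ⟶ C),
    CategoryTheory.IsPullback x y c z → ∀ (w : P ⟶ A), w ≫ a = x →
      ∃! wStar : Q ⟶ D, wStar ≫ d = z ∧ y ≫ wStar = w ≫ b

/-- Vertical FPC–pushout decomposition: in an adhesive category with epi–mono
factorizations and effective unions, if `z`, `w`, `w'`, `y`, `v'`, `x` and `w ≫ v` are
monomorphisms, the top square is a pushout and `(x, v' ∘ w')` is a final pullback
complement of `(v ∘ w, z)`, then `(x, v')` is a final pullback complement of `(v, y)`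
and `v` is a monomorphism. -/
theorem fpc_vertical_pushout_decomp {𝒞 : Type u} [Category.{v} 𝒞] [Adhesive 𝒞]
    (hfact : HasEpiMonoFactorizations 𝒞) (heu : HasEffectiveUnions 𝒞)
    {Z' Z Y' Y X' X : 𝒞}
    (z : Z' ⟶ Z) (w : Z ⟶ Y) (w' : Z' ⟶ Y') (y : Y' ⟶ Y)
    (v : Y ⟶ X) (v' : Y' ⟶ X') (x : X' ⟶ X)
    (hbot : y ≫ v = v' ≫ x)
    [Mono z] [Mono w] [Mono w'] [Mono y] [Mono v'] [Mono x] (hvw : Mono (w ≫ v))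
    (htop : IsPushout z w' w y)
    (hcomp : IsFinalPullbackComplement z (w ≫ v) (w' ≫ v') x) :
    IsFinalPullbackComplement y v v' x ∧ Mono v := by
  haveI := hvw
  -- the big pullback square from the FPC
  have hbig : IsPullback z (w' ≫ v') (w ≫ v) x := hcomp.isPullback
  -- step 1 : `IsPullback z w' (w ≫ v) (v' ≫ x)`
  have hzw'comm : z ≫ w ≫ v = w' ≫ v' ≫ x := by
    rw [← Category.assoc, htop.w, Category.assoc, hbot]
  have hzw' : IsPullback z w' (w ≫ v) (v' ≫ x) := by
    refine IsPullback.of_isLimit' ⟨hzw'comm⟩ ?_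
    refine PullbackCone.IsLimit.mk _ (fun s => hbig.lift s.fst (s.snd ≫ v')
        (by rw [Category.assoc, ← s.condition])) (fun s => hbig.lift_fst _ _ _) ?_ ?_
    · intro s
      rw [← cancel_mono v', Category.assoc]
      exact hbig.lift_snd _ _ _
    · intro s m hm₁ hm₂
      rw [← cancel_mono z, hm₁, hbig.lift_fst]
  -- step 2 : `v` is a monomorphism, by effective unions
  have hv : Mono v := by
    refine heu z w' w y (w ≫ v) (v' ≫ x) v inferInstance inferInstance inferInstance
      inferInstance hvw (mono_comp _ _) htop hzw' rfl hbot
  -- the top square is also a pullback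
  have htoppb : IsPullback z w' w y := Adhesive.isPullback_of_isPushout_of_mono_left htop
  -- step 3 : the bottom square is a pullback, via the van Kampen property
  have hbotpb : IsPullback y v' v x := by
    refine IsPullback.of_isLimit' ⟨hbot⟩ ?_
    -- construction of the lift, for an arbitrary cone
    have key : ∀ (T : 𝒞) (a : T ⟶ Y) (b : T ⟶ X'), a ≫ v = b ≫ x →
        ∃ u : T ⟶ Y', u ≫ y = a ∧ u ≫ v' = b := by
      intro T a b hab
      -- pull the pushout square back along `a : T ⟶ Y`
      let pz : pullback w a ⟶ Z := pullback.fst w a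
      let pt : pullback w a ⟶ T := pullback.snd w a
      let py : pullback y a ⟶ Y' := pullback.fst y a
      let qt : pullback y a ⟶ T := pullback.snd y a
      let pzw' : pullback (z ≫ w) a ⟶ Z' := pullback.fst (z ≫ w) a
      let pt' : pullback (z ≫ w) a ⟶ T := pullback.snd (z ≫ w) a
      have hc_w : pz ≫ w = pt ≫ a := pullback.condition
      have hc_y : py ≫ y = qt ≫ a := pullback.condition
      have hc_zw : pzw' ≫ (z ≫ w) = pt' ≫ a := pullback.condition
      let f' : pullback (z ≫ w) a ⟶ pullback w a :=
        pullback.lift (pzw' ≫ z) pt' (by rw [Category.assoc]; exact hc_zw)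
      let g' : pullback (z ≫ w) a ⟶ pullback y a :=
        pullback.lift (pzw' ≫ w') pt'
          (by rw [Category.assoc, ← htop.w]; exact hc_zw)
      have hf'fst : f' ≫ pz = pzw' ≫ z := pullback.lift_fst _ _ _
      have hf'snd : f' ≫ pt = pt' := pullback.lift_snd _ _ _
      have hg'fst : g' ≫ py = pzw' ≫ w' := pullback.lift_fst _ _ _
      have hg'snd : g' ≫ qt = pt' := pullback.lift_snd _ _ _
      have hf : IsPullback f' pzw' pz z := by
        refine IsPullback.of_right ?_ hf'fst (IsPullback.of_hasPullback w a).flip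
        rw [hf'snd]
        exact (IsPullback.of_hasPullback (z ≫ w) a).flip
      have hg : IsPullback g' pzw' py w' := by
        refine IsPullback.of_right ?_ hg'fst (IsPullback.of_hasPullback y a).flip
        rw [hg'snd, ← htop.w]
        exact (IsPullback.of_hasPullback (z ≫ w) a).flip
      have hpo : IsPushout f' g' pt qt := by
        refine (Adhesive.van_kampen htop f' g' pt qt pzw' pz py a hf hg
          ⟨pullback.condition.symm⟩ ⟨pullback.condition.symm⟩
          ⟨hf'snd.trans hg'snd.symm⟩).mpr
          ⟨(IsPullback.of_hasPullback w a).flip, (IsPullback.of_hasPullback y a).flip⟩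
      -- the map `pullback w a ⟶ Z'` induced by the big pullback
      let k : pullback w a ⟶ Z' := hbig.lift pz (pt ≫ b)
        (by rw [← Category.assoc, pullback.condition, Category.assoc, Category.assoc, hab])
      have hkz : k ≫ z = pz := hbig.lift_fst _ _ _
      have hkw'v' : k ≫ w' ≫ v' = pt ≫ b := hbig.lift_snd _ _ _
      -- glue along the pulled-back pushout
      have hcompat : f' ≫ k ≫ w' = g' ≫ py := by
        rw [← cancel_mono y]
        calc (f' ≫ k ≫ w') ≫ y = f' ≫ k ≫ (w' ≫ y) := by simp only [Category.assoc]
          _ = f' ≫ (k ≫ z) ≫ w := by rw [← htop.w]; simp only [Category.assoc]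
          _ = f' ≫ pz ≫ w := by rw [hkz]
          _ = (f' ≫ pt) ≫ a := by rw [hc_w]; simp only [Category.assoc]
          _ = (g' ≫ qt) ≫ a := by rw [hf'snd, hg'snd]
          _ = g' ≫ py ≫ y := by rw [Category.assoc, ← hc_y]
          _ = (g' ≫ py) ≫ y := by simp only [Category.assoc]
      have hdy : hpo.desc (k ≫ w') py hcompat ≫ y = a := by
        refine hpo.hom_ext ?_ ?_
        · rw [← Category.assoc, hpo.inl_desc, Category.assoc, ← htop.w, ← Category.assoc, hkz]
          exact hc_w
        · rw [← Category.assoc, hpo.inr_desc]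
          exact hc_y
      refine ⟨hpo.desc (k ≫ w') py hcompat, hdy, ?_⟩
      rw [← cancel_mono x, Category.assoc, ← hbot, ← Category.assoc, hdy, hab]
    choose u hu₁ hu₂ using key
    refine PullbackCone.IsLimit.mk _ (fun s => u s.pt s.fst s.snd s.condition)
      (fun s => hu₁ _ _ _ _) (fun s => hu₂ _ _ _ _) ?_
    intro s m hm₁ _
    rw [← cancel_mono y, hm₁, hu₁]
  -- step 4 : the universal property of the FPC
  refine ⟨⟨hbotpb, ?_⟩, hv⟩
  intro P Q p q r hpqr w₀ hw₀
  -- pull back `w ≫ v` along `r`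
  let rz : pullback (w ≫ v) r ⟶ Z := pullback.fst (w ≫ v) r
  let rq : pullback (w ≫ v) r ⟶ Q := pullback.snd (w ≫ v) r
  have hR : IsPullback rz rq (w ≫ v) r := IsPullback.of_hasPullback _ _
  let s₀ : pullback (w ≫ v) r ⟶ P := hpqr.lift (rz ≫ w) rq
    (by rw [Category.assoc]; exact pullback.condition)
  have hs₀p : s₀ ≫ p = rz ≫ w := hpqr.lift_fst _ _ _
  have hs₀q : s₀ ≫ q = rq := hpqr.lift_snd _ _ _
  let t₀ : pullback (w ≫ v) r ⟶ Z' := htoppb.lift rz (s₀ ≫ w₀)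
    (by rw [Category.assoc, hw₀, hs₀p])
  have ht₀z : t₀ ≫ z = rz := htoppb.lift_fst _ _ _
  have ht₀w' : t₀ ≫ w' = s₀ ≫ w₀ := htoppb.lift_snd _ _ _
  obtain ⟨ws, ⟨hws₁, hws₂⟩, hwuniq⟩ := hcomp.universal rz rq r hR t₀ ht₀z
  refine ⟨ws, ⟨hws₁, ?_⟩, ?_⟩
  · -- `q ≫ ws = w₀ ≫ v'` since `x` is a monomorphism
    rw [← cancel_mono x, Category.assoc, hws₁, ← hpqr.w, ← hw₀, Category.assoc, hbot,
      Category.assoc]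
  · rintro u ⟨hu₁, hu₂⟩
    refine hwuniq u ⟨hu₁, ?_⟩
    rw [← hs₀q, Category.assoc, hu₂, ← Category.assoc, ← ht₀w', Category.assoc]
end

section
/- Let C be an adhesive category with a strict initial object ∅ such that every morphism out of ∅ is a monomorphism, and with binary coproducts. Let f : Z ⟶ X ⨿ Y be a monomorphism. Let V, with projections v : V ⟶ X and ι_V : V ⟶ Z, be a pullback of the cospan (inl : X ⟶ X ⨿ Y, f), and let W, with projections w : W ⟶ Y and ι_W : W ⟶ Z, be a pullback of the cospan (inr : Y ⟶ X ⨿ Y, f). Then the cofan with injections ι_V : V ⟶ Z and ι_W : W ⟶ Z exhibits Z as a coproduct of V and W; consequently Z ≅ V ⨿ W, and under this isomorphism f corresponds to v ⨿ w (where v and w are monomorphisms). -/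
open CategoryTheory CategoryTheory.Limits

universe v u

/-- With a strict initial object, the square `∅ → A, ∅ = ∅, m : A ⟶ B, ∅ → B` is a pullback. -/
lemma isPullback_initial_to_aux {𝒞 : Type u} [Category.{v} 𝒞] [HasInitial 𝒞]
    [HasStrictInitialObjects 𝒞] {A B : 𝒞} (m : A ⟶ B) :
    IsPullback (initial.to A) (𝟙 (⊥_ 𝒞)) m (initial.to B) := by
  refine IsPullback.of_isLimit' ⟨initial.hom_ext _ _⟩ ?_
  refine PullbackCone.IsLimit.mk _ (fun s => s.snd) (fun s => ?_) (fun s => by simp)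
    (fun s m' _ h₂ => by simpa using h₂)
  · have : IsIso s.snd := initialIsInitial.isIso_to s.snd
    exact (IsInitial.ofIso initialIsInitial (asIso s.snd).symm).hom_ext _ _

/-- In an adhesive category with a strict initial object whose outgoing morphisms are
monomorphisms, and with binary coproducts: for a monomorphism `f : Z ⟶ X ⨿ Y`, with
`V` the pullback of `f` along `inl` and `W` the pullback of `f` along `inr`, the
cofan with injections `ιV : V ⟶ Z`, `ιW : W ⟶ Z` exhibits `Z` as the coproduct
`V ⨿ W`, and the restricted morphisms `v : V ⟶ X`, `w : W ⟶ Y` are monomorphisms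
(so that under the induced isomorphism `Z ≅ V ⨿ W`, `f` corresponds to `v ⨿ w`). -/
theorem mono_into_coprod_decomposes {𝒞 : Type u} [Category.{v} 𝒞]
    [Adhesive 𝒞] [HasInitial 𝒞] [HasStrictInitialObjects 𝒞] [InitialMonoClass 𝒞]
    [HasBinaryCoproducts 𝒞]
    {X Y Z V W : 𝒞} (f : Z ⟶ X ⨿ Y) [Mono f]
    (v : V ⟶ X) (ιV : V ⟶ Z) (hV : IsPullback v ιV coprod.inl f)
    (w : W ⟶ Y) (ιW : W ⟶ Z) (hW : IsPullback w ιW coprod.inr f) :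
    Nonempty (IsColimit (BinaryCofan.mk ιV ιW)) ∧ Mono v ∧ Mono w := by
  have H : IsPushout (initial.to X) (initial.to Y) (coprod.inl : X ⟶ X ⨿ Y) coprod.inr :=
    IsPushout.of_hasBinaryCoproduct' X Y
  have VK := Adhesive.van_kampen H
  have HP : IsPushout (initial.to V) (initial.to W) ιV ιW := by
    refine (VK (initial.to V) (initial.to W) ιV ιW (𝟙 _) v w f
      (isPullback_initial_to_aux v) (isPullback_initial_to_aux w)
      hV.flip.toCommSq hW.flip.toCommSq ⟨initial.hom_ext _ _⟩).mpr ⟨hV.flip, hW.flip⟩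
  refine ⟨⟨isCoproductOfIsInitialIsPushout ιV ιW (initial.to V) (initial.to W)
      initialIsInitial ?_⟩, ?_, ?_⟩
  · exact IsColimit.ofIsoColimit HP.isColimit
      (PushoutCocone.ext (Iso.refl _) (by exact Category.comp_id _) (by exact Category.comp_id _))
  · exact PullbackCone.mono_fst_of_is_pullback_of_mono hV.isLimit
  · exact PullbackCone.mono_fst_of_is_pullback_of_mono hW.isLimit
end

section
/- Every balanced adhesive category with epi–mono factorizations has effective unions: for every pushout square of monomorphisms b' : A ⟶ B, c' : A ⟶ C, e : B ⟶ D, f : C ⟶ D (so (e, f) is a pushout cocone of the span (b', c')) and for all monomorphisms b : B ⟶ E, c : C ⟶ E with b ∘ b' = c ∘ c' such that this exterior square is a pullback, the unique mediating morphism d : D ⟶ E with d ∘ e = b and d ∘ f = c is a monomorphism. -/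
open CategoryTheory CategoryTheory.Limits

universe v u

/-- Key lemma: in an adhesive category, given a pushout square of monos `b', c', e, f`
which maps to a pullback square of monos `b, c` via `d`, the square `(𝟙 B, e, b, d)`
has the universal property of a pullback: `u ≫ b = v ≫ d → u ≫ e = v`. -/
lemma effectiveUnions_aux {𝒞 : Type u} [Category.{v} 𝒞] [Adhesive 𝒞]
    {A B C D E : 𝒞} (b' : A ⟶ B) (c' : A ⟶ C) (e : B ⟶ D) (f : C ⟶ D)
    (b : B ⟶ E) (c : C ⟶ E) (d : D ⟶ E)
    (hb' : Mono b') (hc' : Mono c') (hb : Mono b)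
    (H : IsPushout b' c' e f) (HP : IsPullback b' c' b c)
    (he : e ≫ d = b) (hf : f ≫ d = c) :
    ∀ {T : 𝒞} (u : T ⟶ B) (v : T ⟶ D), u ≫ b = v ≫ d → u ≫ e = v := by
  haveI := hb'; haveI := hc'; haveI := hb
  haveI : HasPullback b d := Adhesive.hasPullback_of_mono_left b d
  set pfst := pullback.fst b d with hpfst
  set psnd := pullback.snd b d with hpsnd
  have Psq : IsPullback pfst psnd b d := IsPullback.of_hasPullback b d
  -- the canonical map `l : B ⟶ P` and `i' : A ⟶ P`
  obtain ⟨l, hl1, hl2⟩ : ∃ l : B ⟶ pullback b d, l ≫ pfst = 𝟙 B ∧ l ≫ psnd = e :=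
    ⟨Psq.lift (𝟙 B) e (by rw [Category.id_comp, he]), Psq.lift_fst _ _ _, Psq.lift_snd _ _ _⟩
  obtain ⟨i', hi1, hi2⟩ : ∃ i' : A ⟶ pullback b d, i' ≫ pfst = b' ∧ i' ≫ psnd = c' ≫ f :=
    ⟨Psq.lift b' (c' ≫ f) (by rw [HP.w, Category.assoc, hf]), Psq.lift_fst _ _ _,
      Psq.lift_snd _ _ _⟩
  -- the front face over `e` is a pullback
  have hhcomm : l ≫ psnd = (𝟙 B) ≫ e := by rw [hl2, Category.id_comp]
  have hh : IsPullback l (𝟙 B) psnd e := by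
    refine IsPullback.of_isLimit' ⟨hhcomm⟩ ?_
    refine PullbackCone.IsLimit.mk _ (fun s => s.snd) (fun s => ?_) (fun s => ?_)
      (fun s m _ hm2 => ?_)
    · refine Psq.hom_ext ?_ ?_
      · rw [Category.assoc, hl1, Category.comp_id]
        have : s.fst ≫ pfst ≫ b = s.snd ≫ b := by
          rw [Psq.w, ← Category.assoc, s.condition, Category.assoc, he]
        rw [← Category.assoc] at this
        exact (cancel_mono b).mp this |>.symm
      · rw [Category.assoc, hl2, s.condition]
    · rw [Category.comp_id]
    · rw [Category.comp_id] at hm2; exact hm2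
  -- the front face over `f` is a pullback
  have hicomm : i' ≫ psnd = c' ≫ f := hi2
  have hi : IsPullback i' c' psnd f := by
    refine IsPullback.of_isLimit' ⟨hicomm⟩ ?_
    refine PullbackCone.IsLimit.mk _
      (fun s => HP.lift (s.fst ≫ pfst) s.snd ?_) (fun s => ?_) (fun s => ?_)
      (fun s m hm1 hm2 => ?_)
    · rw [Category.assoc, Psq.w, ← Category.assoc, s.condition, Category.assoc, hf]
    · refine Psq.hom_ext ?_ ?_
      · rw [Category.assoc, hi1, HP.lift_fst]
      · rw [Category.assoc, hi2, ← Category.assoc, HP.lift_snd, s.condition]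
    · exact HP.lift_snd _ _ _
    · refine HP.hom_ext ?_ ?_
      · rw [HP.lift_fst, ← hi1, ← Category.assoc, hm1]
      · rw [HP.lift_snd, hm2]
  -- back faces
  have hfface : IsPullback b' (𝟙 A) (𝟙 B) b' :=
    IsPullback.of_vert_isIso ⟨by rw [Category.comp_id, Category.id_comp]⟩
  have hgface : IsPullback (𝟙 A) (𝟙 A) c' c' := IsKernelPair.id_of_mono c'
  -- the top square commutes
  have wtop : b' ≫ l = (𝟙 A) ≫ i' := by
    rw [Category.id_comp]
    refine Psq.hom_ext ?_ ?_
    · rw [Category.assoc, hl1, Category.comp_id, hi1]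
    · rw [Category.assoc, hl2, hi2, H.w]
  -- van Kampen: the top square is a pushout
  have VK := Adhesive.van_kampen H
  have TP : IsPushout b' (𝟙 A) l i' :=
    (VK b' (𝟙 A) l i' (𝟙 A) (𝟙 B) c' psnd hfface hgface hh.toCommSq hi.toCommSq
      ⟨wtop⟩).mpr ⟨hh, hi⟩
  -- hence `l` has a retraction which is also a section
  obtain ⟨m, hm1, hm2⟩ : ∃ m : pullback b d ⟶ B, l ≫ m = 𝟙 B ∧ i' ≫ m = b' :=
    ⟨TP.desc (𝟙 B) b' (by rw [Category.comp_id, Category.id_comp]), TP.inl_desc _ _ _,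
      TP.inr_desc _ _ _⟩
  have hml : m ≫ l = 𝟙 (pullback b d) := by
    refine TP.hom_ext ?_ ?_
    · rw [← Category.assoc, hm1, Category.id_comp, Category.comp_id]
    · rw [← Category.assoc, hm2, Category.comp_id, wtop, Category.id_comp]
  -- conclude
  intro T u v huv
  obtain ⟨s, hs1, hs2⟩ : ∃ s : T ⟶ pullback b d, s ≫ pfst = u ∧ s ≫ psnd = v :=
    ⟨Psq.lift u v huv, Psq.lift_fst _ _ _, Psq.lift_snd _ _ _⟩
  have hu : u = s ≫ m := by
    rw [← hs1]
    conv_lhs => rw [← Category.comp_id s, ← hml]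
    rw [← Category.assoc, Category.assoc, hl1, Category.comp_id]
  calc u ≫ e = s ≫ (m ≫ l) ≫ psnd := by rw [hu, ← hl2]; simp only [Category.assoc]
    _ = v := by rw [hml, Category.id_comp, hs2]

/-- Every balanced adhesive category with epi–mono factorizations has effective unions:
for every pushout square of monomorphisms `b' : A ⟶ B`, `c' : A ⟶ C`, `e : B ⟶ D`,
`f : C ⟶ D` and all monomorphisms `b : B ⟶ E`, `c : C ⟶ E` with `b ∘ b' = c ∘ c'`
forming a pullback square, the unique mediating morphism `d : D ⟶ E` with `d ∘ e = b`
and `d ∘ f = c` is a monomorphism. -/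
theorem effectiveUnions_of_balanced_adhesive {𝒞 : Type u} [Category.{v} 𝒞]
    [Adhesive 𝒞] [Balanced 𝒞]
    (hfact : ∀ {X Y : 𝒞} (f : X ⟶ Y),
      ∃ (E : 𝒞) (e : X ⟶ E) (m : E ⟶ Y), Epi e ∧ Mono m ∧ e ≫ m = f) :
    ∀ {A B C D E : 𝒞} (b' : A ⟶ B) (c' : A ⟶ C) (e : B ⟶ D) (f : C ⟶ D)
      (b : B ⟶ E) (c : C ⟶ E) (d : D ⟶ E),
      Mono b' → Mono c' → Mono e → Mono f → Mono b → Mono c →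
      IsPushout b' c' e f → IsPullback b' c' b c →
      e ≫ d = b → f ≫ d = c → Mono d := by
  intro A B C D E b' c' e f b c d hb' hc' he' hf' hb hc H HP he hf
  haveI := hb'; haveI := hc'; haveI := he'; haveI := hf'; haveI := hb; haveI := hc
  have key1 : ∀ {T : 𝒞} (u : T ⟶ B) (v : T ⟶ D), u ≫ b = v ≫ d → u ≫ e = v :=
    effectiveUnions_aux b' c' e f b c d hb' hc' hb H HP he hf
  have key2 : ∀ {T : 𝒞} (u : T ⟶ C) (v : T ⟶ D), u ≫ c = v ≫ d → u ≫ f = v :=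
    effectiveUnions_aux c' b' f e c b d hc' hb' hc H.flip HP.flip hf he
  refine ⟨fun {T} t₁ t₂ hT => ?_⟩
  -- pull back the pushout square along `t₁`
  haveI : HasPullback e t₁ := Adhesive.hasPullback_of_mono_left e t₁
  haveI : HasPullback f t₁ := Adhesive.hasPullback_of_mono_left f t₁
  haveI : HasPullback (b' ≫ e) t₁ := Adhesive.hasPullback_of_mono_left (b' ≫ e) t₁
  set pX := pullback.fst e t₁
  set qX := pullback.snd e t₁
  set pY := pullback.fst f t₁
  set qY := pullback.snd f t₁
  set pW := pullback.fst (b' ≫ e) t₁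
  set qW := pullback.snd (b' ≫ e) t₁
  have sqX : IsPullback pX qX e t₁ := IsPullback.of_hasPullback e t₁
  have sqY : IsPullback pY qY f t₁ := IsPullback.of_hasPullback f t₁
  have sqW : IsPullback pW qW (b' ≫ e) t₁ := IsPullback.of_hasPullback (b' ≫ e) t₁
  obtain ⟨f'', hfX, hfT⟩ : ∃ f'' : pullback (b' ≫ e) t₁ ⟶ pullback e t₁,
      f'' ≫ pX = pW ≫ b' ∧ f'' ≫ qX = qW :=
    ⟨sqX.lift (pW ≫ b') qW (by rw [Category.assoc, sqW.w]), sqX.lift_fst _ _ _,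
      sqX.lift_snd _ _ _⟩
  obtain ⟨g'', hgY, hgT⟩ : ∃ g'' : pullback (b' ≫ e) t₁ ⟶ pullback f t₁,
      g'' ≫ pY = pW ≫ c' ∧ g'' ≫ qY = qW :=
    ⟨sqY.lift (pW ≫ c') qW (by rw [Category.assoc, ← H.w, sqW.w]), sqY.lift_fst _ _ _,
      sqY.lift_snd _ _ _⟩
  -- back faces are pullbacks
  have hfface : IsPullback f'' pW pX b' := by
    refine IsPullback.of_right ?_ hfX sqX.flip
    rw [hfT]; exact sqW.flip
  have hgface : IsPullback g'' pW pY c' := by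
    refine IsPullback.of_right ?_ hgY sqY.flip
    rw [hgT, ← H.w]; exact sqW.flip
  -- van Kampen stability: the pulled-back square is a pushout
  have VK := Adhesive.van_kampen H
  have TP : IsPushout f'' g'' qX qY :=
    (VK f'' g'' qX qY pW pX pY t₁ hfface hgface sqX.flip.toCommSq sqY.flip.toCommSq
      ⟨by rw [hfT, hgT]⟩).mpr ⟨sqX.flip, sqY.flip⟩
  -- compare `t₁` and `t₂` on the two pieces
  refine TP.hom_ext ?_ ?_
  · have h1 : qX ≫ t₁ = pX ≫ e := sqX.w.symm
    have h2 : pX ≫ e = qX ≫ t₂ := by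
      refine key1 pX (qX ≫ t₂) ?_
      rw [← he, ← Category.assoc, sqX.w, Category.assoc, Category.assoc, hT]
    rw [h1, h2]
  · have h1 : qY ≫ t₁ = pY ≫ f := sqY.w.symm
    have h2 : pY ≫ f = qY ≫ t₂ := by
      refine key2 pY (qY ≫ t₂) ?_
      rw [← hf, ← Category.assoc, sqY.w, Category.assoc, Category.assoc, hT]
    rw [h1, h2]
end

section
/- (Horizontal FPC composition and decomposition.) In any category, consider morphisms e : C ⟶ B, d : B ⟶ A, vertical morphisms a : A ⟶ A', b : B ⟶ B', c : C ⟶ C', and bottom morphisms d' : B' ⟶ A', e' : C' ⟶ B', with a ∘ d = d' ∘ b and b ∘ e = e' ∘ c. If (d', b) is a final pullback complement of (a, d), then (d' ∘ e', c) is a final pullback complement of (a, d ∘ e) if and only if (e', c) is a final pullback complement of (b, e). -/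
open CategoryTheory CategoryTheory.Limits

universe v u


/-- Horizontal FPC composition and decomposition: given two horizontally pasted commuting
squares where the left square `(d', b)` is a final pullback complement of `(a, d)`,
the pasted square `(d' ≫ e', c)` is a final pullback complement of `(a, d ∘ e)` if and
only if the right square `(e', c)` is a final pullback complement of `(b, e)`. -/
theorem fpc_horizontal_comp_decomp {𝒞 : Type u} [Category.{v} 𝒞]
    {A B C A' B' C' : 𝒞}
    (e : C ⟶ B) (d : B ⟶ A) (a : A ⟶ A') (b : B ⟶ B') (c : C ⟶ C')
    (d' : B' ⟶ A') (e' : C' ⟶ B')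
    (hleft : d ≫ a = b ≫ d') (hright : e ≫ b = c ≫ e')
    (h : IsFinalPullbackComplement d a b d') :
    IsFinalPullbackComplement (e ≫ d) a c (e' ≫ d') ↔
      IsFinalPullbackComplement e b c e' := by
  constructor
  · intro H
    refine ⟨IsPullback.of_right H.isPullback hright h.isPullback, ?_⟩
    intro P Q x y z hpb w hw
    have hbig : IsPullback (x ≫ d) y a (z ≫ d') := hpb.paste_horiz h.isPullback
    obtain ⟨u, ⟨hu1, hu2⟩, huniq⟩ :=
      H.universal (x ≫ d) y (z ≫ d') hbig w (by rw [← hw, Category.assoc])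
    obtain ⟨v, ⟨hv1, hv2⟩, hvuniq⟩ := h.universal (x ≫ d) y (z ≫ d') hbig x rfl
    have hz : z = v := hvuniq z ⟨rfl, hpb.w.symm⟩
    have hue' : u ≫ e' = v := hvuniq (u ≫ e')
      ⟨by rw [Category.assoc]; exact hu1,
       by rw [← Category.assoc, hu2, Category.assoc, ← hright, ← Category.assoc, hw]⟩
    refine ⟨u, ⟨hue'.trans hz.symm, hu2⟩, ?_⟩
    rintro v' ⟨hv'1, hv'2⟩
    exact huniq v' ⟨by rw [← Category.assoc, hv'1], hv'2⟩
  · intro H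
    refine ⟨H.isPullback.paste_horiz h.isPullback, ?_⟩
    intro P Q x y z hpb w hw
    obtain ⟨u, ⟨hu1, hu2⟩, huniq⟩ :=
      h.universal x y z hpb (w ≫ e) (by rw [Category.assoc, hw])
    have hmid' : IsPullback ((w ≫ e) ≫ d) y a (u ≫ d') := by
      rw [Category.assoc, hw, hu1]; exact hpb
    have hmid : IsPullback (w ≫ e) y b u :=
      IsPullback.of_right hmid' hu2.symm h.isPullback
    obtain ⟨ws, ⟨hws1, hws2⟩, hwsuniq⟩ := H.universal (w ≫ e) y u hmid w rfl
    refine ⟨ws, ⟨by rw [← Category.assoc, hws1, hu1], hws2⟩, ?_⟩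
    rintro v' ⟨hv'1, hv'2⟩
    have hv'e' : v' ≫ e' = u := huniq (v' ≫ e')
      ⟨by rw [Category.assoc]; exact hv'1,
       by rw [← Category.assoc, hv'2, Category.assoc, ← hright, ← Category.assoc]⟩
    exact hwsuniq v' ⟨hv'e', hv'2⟩
end

section
/- (Vertical FPC–pullback decomposition.) Let C be an adhesive category. Consider morphisms z : Z' ⟶ Z, w : Z ⟶ Y, w' : Z' ⟶ Y', y : Y' ⟶ Y with w ∘ z = y ∘ w', and morphisms v : Y ⟶ X, v' : Y' ⟶ X', x : X' ⟶ X with v ∘ y = x ∘ v'. If v is a monomorphism, the bottom square v ∘ y = x ∘ v' is a pullback, and (x, v' ∘ w') is a final pullback complement of (v ∘ w, z), then (y, w') is a final pullback complement of (w, z) and (x, v') is a final pullback complement of (v, y). -/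
open CategoryTheory CategoryTheory.Limits

universe v u


/-- If `m` is a monomorphism, then the square with `f` on top, `𝟙` on the left,
`m` on the right and `f ≫ m` on the bottom is a pullback. -/
theorem isPullback_id_comp_of_mono {𝒞 : Type u} [Category.{v} 𝒞] {A B C : 𝒞}
    (f : A ⟶ B) (m : B ⟶ C) [Mono m] : IsPullback f (𝟙 A) m (f ≫ m) := by
  refine IsPullback.of_isLimit' ⟨by simp⟩
    (PullbackCone.IsLimit.mk _ (fun s => s.snd) (fun s => ?_) (fun s => by simp)
      (fun s m' _ h2 => by simpa using h2))
  have h := s.condition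
  rw [← Category.assoc] at h
  exact ((cancel_mono m).mp h).symm

/-- Vertical FPC–pullback decomposition in an adhesive category: if `v` is a monomorphism,
the bottom square `v ∘ y = x ∘ v'` is a pullback, the top square `w ∘ z = y ∘ w'` commutes,
and `(x, v' ∘ w')` is a final pullback complement of `(v ∘ w, z)`, then `(y, w')` is a
final pullback complement of `(w, z)` and `(x, v')` is a final pullback complement of
`(v, y)`. -/
theorem fpc_vertical_pullback_decomp {𝒞 : Type u} [Category.{v} 𝒞] [Adhesive 𝒞]
    {Z' Z Y' Y X' X : 𝒞}
    (z : Z' ⟶ Z) (w : Z ⟶ Y) (w' : Z' ⟶ Y') (y : Y' ⟶ Y)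
    (v : Y ⟶ X) (v' : Y' ⟶ X') (x : X' ⟶ X)
    (htop : z ≫ w = w' ≫ y)
    [Mono v]
    (hbotPB : IsPullback y v' v x)
    (hcomp : IsFinalPullbackComplement z (w ≫ v) (w' ≫ v') x) :
    IsFinalPullbackComplement z w w' y ∧ IsFinalPullbackComplement y v v' x := by
  -- the top square is a pullback
  have htopPB : IsPullback z w' w y := IsPullback.of_bot hcomp.isPullback htop hbotPB
  constructor
  · -- Part 1 : (y, w') is an FPC of (w, z)
    refine ⟨htopPB, ?_⟩
    intro P Q x₀ y₀ z₀ hsq w₀ hw₀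
    have hsq' : IsPullback x₀ y₀ (w ≫ v) (z₀ ≫ v) := by
      simpa using hsq.paste_vert (isPullback_id_comp_of_mono z₀ v)
    obtain ⟨u, ⟨hu1, hu2⟩, huniq⟩ := hcomp.universal x₀ y₀ (z₀ ≫ v) hsq' w₀ hw₀
    have hcone : z₀ ≫ v = u ≫ x := hu1.symm
    refine ⟨hbotPB.lift z₀ u hcone, ⟨hbotPB.lift_fst _ _ _, ?_⟩, ?_⟩
    · -- y₀ ≫ lift = w₀ ≫ w'
      apply hbotPB.hom_ext
      · rw [Category.assoc, Category.assoc, hbotPB.lift_fst, ← hsq.w, ← hw₀,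
          Category.assoc, htop]
      · rw [Category.assoc, Category.assoc, hbotPB.lift_snd, hu2]
    · -- uniqueness
      rintro t ⟨ht1, ht2⟩
      apply hbotPB.hom_ext
      · rw [ht1, hbotPB.lift_fst]
      · rw [hbotPB.lift_snd]
        refine huniq (t ≫ v') ⟨?_, ?_⟩
        · rw [Category.assoc, ← hbotPB.w, ← Category.assoc, ht1]
        · rw [← Category.assoc, ht2, Category.assoc]
  · -- Part 2 : (x, v') is an FPC of (v, y)
    refine ⟨hbotPB, ?_⟩
    intro P Q x₀ y₀ z₀ hsq w₀ hw₀
    haveI : Mono v' := by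
      constructor
      intro W g h e
      refine hbotPB.hom_ext ?_ e
      rw [← cancel_mono v, Category.assoc, Category.assoc, hbotPB.w, ← Category.assoc, e,
        Category.assoc]
    haveI : Mono y₀ := by
      constructor
      intro W g h e
      refine hsq.hom_ext ?_ e
      rw [← cancel_mono v, Category.assoc, Category.assoc, hsq.w, ← Category.assoc, e,
        Category.assoc]
    -- push out `y₀` (a mono) along `w₀ ≫ v'`
    have hPO : IsPushout y₀ (w₀ ≫ v') (pushout.inl y₀ (w₀ ≫ v')) (pushout.inr y₀ (w₀ ≫ v')) :=
      IsPushout.of_hasPushout _ _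
    set a₂ : Q ⟶ pushout y₀ (w₀ ≫ v') := pushout.inl y₀ (w₀ ≫ v') with ha₂
    set b₂ : X' ⟶ pushout y₀ (w₀ ≫ v') := pushout.inr y₀ (w₀ ≫ v') with hb₂
    haveI : Mono b₂ := Adhesive.mono_of_isPushout_of_mono_left hPO
    have hdesc : y₀ ≫ z₀ = (w₀ ≫ v') ≫ x := by
      rw [← hsq.w, ← hw₀, Category.assoc, Category.assoc, hbotPB.w]
    obtain ⟨t₂, ht_inl, ht_inr⟩ :
        ∃ t₂ : pushout y₀ (w₀ ≫ v') ⟶ X, a₂ ≫ t₂ = z₀ ∧ b₂ ≫ t₂ = x :=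
      ⟨hPO.desc z₀ x hdesc, hPO.inl_desc _ _ _, hPO.inr_desc _ _ _⟩
    -- pull back `v` (a mono) along `t₂`
    have hE : IsPullback (pullback.fst v t₂) (pullback.snd v t₂) v t₂ :=
      IsPullback.of_hasPullback v t₂
    set fE := pullback.fst v t₂ with hfE
    set sE := pullback.snd v t₂ with hsE
    have hPcomm : x₀ ≫ v = (y₀ ≫ a₂) ≫ t₂ := by rw [Category.assoc, ht_inl, hsq.w]
    have hicomm : y ≫ v = (v' ≫ b₂) ≫ t₂ := by rw [Category.assoc, ht_inr, hbotPB.w]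
    obtain ⟨hP, hP_f, hP_s⟩ :
        ∃ p : P ⟶ pullback v t₂, p ≫ fE = x₀ ∧ p ≫ sE = y₀ ≫ a₂ :=
      ⟨hE.lift _ _ hPcomm, hE.lift_fst _ _ _, hE.lift_snd _ _ _⟩
    obtain ⟨i', i'_f, i'_s⟩ :
        ∃ p : Y' ⟶ pullback v t₂, p ≫ fE = y ∧ p ≫ sE = v' ≫ b₂ :=
      ⟨hE.lift _ _ hicomm, hE.lift_fst _ _ _, hE.lift_snd _ _ _⟩
    -- the two faces of the van Kampen cube over `a₂` and `b₂` are pullbacks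
    have hA : IsPullback hP y₀ sE a₂ := by
      refine IsPullback.of_isLimit' ⟨hP_s⟩
        (PullbackCone.IsLimit.mk _
          (fun s => hsq.lift (s.fst ≫ fE) s.snd ?_) (fun s => ?_)
          (fun s => hsq.lift_snd _ _ _) (fun s m' hm1 hm2 => ?_))
      · rw [Category.assoc, hE.w, ← Category.assoc, s.condition, Category.assoc, ht_inl]
      · apply hE.hom_ext
        · rw [Category.assoc, hP_f, hsq.lift_fst]
        · rw [Category.assoc, hP_s, ← Category.assoc, hsq.lift_snd, ← s.condition]
      · apply hsq.hom_ext
        · rw [hsq.lift_fst, ← hP_f, ← Category.assoc, hm1]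
        · rw [hsq.lift_snd, hm2]
    have hB : IsPullback i' v' sE b₂ := by
      refine IsPullback.of_isLimit' ⟨i'_s⟩
        (PullbackCone.IsLimit.mk _
          (fun s => hbotPB.lift (s.fst ≫ fE) s.snd ?_) (fun s => ?_)
          (fun s => hbotPB.lift_snd _ _ _) (fun s m' hm1 hm2 => ?_))
      · rw [Category.assoc, hE.w, ← Category.assoc, s.condition, Category.assoc, ht_inr]
      · apply hE.hom_ext
        · rw [Category.assoc, i'_f, hbotPB.lift_fst]
        · rw [Category.assoc, i'_s, ← Category.assoc, hbotPB.lift_snd, ← s.condition]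
      · apply hbotPB.hom_ext
        · rw [hbotPB.lift_fst, ← i'_f, ← Category.assoc, hm1]
        · rw [hbotPB.lift_snd, hm2]
    have hcomm : hP = w₀ ≫ i' := by
      apply hE.hom_ext
      · rw [hP_f, Category.assoc, i'_f, hw₀]
      · rw [hP_s, Category.assoc, i'_s, ← Category.assoc, hPO.w]
    -- van Kampen: the top face of the cube is a pushout, hence `i'` is an iso
    have htopPO : IsPushout (𝟙 P) w₀ hP i' :=
      (Adhesive.van_kampen hPO (𝟙 P) w₀ hP i' (𝟙 P) y₀ v' sE
        (IsKernelPair.id_of_mono y₀) (isPullback_id_comp_of_mono w₀ v')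
        ⟨hP_s⟩ ⟨i'_s⟩ ⟨by rw [Category.id_comp, hcomm]⟩).mpr ⟨hA, hB⟩
    obtain ⟨d, hd1, hd2⟩ :
        ∃ d : pullback v t₂ ⟶ Y', hP ≫ d = w₀ ∧ i' ≫ d = 𝟙 Y' :=
      ⟨htopPO.desc w₀ (𝟙 Y') (by rw [Category.id_comp, Category.comp_id]),
        htopPO.inl_desc _ _ _, htopPO.inr_desc _ _ _⟩
    have hdi : d ≫ i' = 𝟙 (pullback v t₂) := by
      apply htopPO.hom_ext
      · rw [← Category.assoc, hd1, Category.comp_id, hcomm]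
      · rw [← Category.assoc, hd2, Category.id_comp, Category.comp_id]
    have hdy : d ≫ y = fE := by
      rw [← i'_f, ← Category.assoc, hdi, Category.id_comp]
    have hdvb : d ≫ (v' ≫ b₂) = sE := by
      rw [← i'_s, ← Category.assoc, hdi, Category.id_comp]
    -- hence `Y'` is the pullback of `v` along `t₂`
    have claim2 : IsPullback y (v' ≫ b₂) v t₂ := by
      refine IsPullback.of_isLimit' ⟨hicomm⟩
        (PullbackCone.IsLimit.mk _
          (fun s => hE.lift s.fst s.snd s.condition ≫ d) (fun s => ?_) (fun s => ?_)
          (fun s m' hm1 hm2 => ?_))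
      · rw [Category.assoc, hdy, hE.lift_fst]
      · rw [Category.assoc, hdvb, hE.lift_snd]
      · have hmi : m' ≫ i' = hE.lift s.fst s.snd s.condition := by
          apply hE.hom_ext
          · rw [Category.assoc, i'_f, hm1, hE.lift_fst]
          · rw [Category.assoc, i'_s, hm2, hE.lift_snd]
        show m' = hE.lift s.fst s.snd s.condition ≫ d
        rw [← hmi, Category.assoc, hd2, Category.comp_id]
    -- paste with the top square: a pullback square over `w ≫ v` with corner the pushout
    have bigPB : IsPullback z (w' ≫ (v' ≫ b₂)) (w ≫ v) t₂ := htopPB.paste_vert claim2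
    obtain ⟨m, ⟨hm1, hm2⟩, hmuniq⟩ :=
      hcomp.universal z (w' ≫ (v' ≫ b₂)) t₂ bigPB (𝟙 Z') (Category.id_comp z)
    -- uniqueness trick : `b₂ ≫ m = 𝟙 X'`
    obtain ⟨e₀, _, heuniq⟩ :=
      hcomp.universal z (w' ≫ v') x hcomp.isPullback (𝟙 Z') (Category.id_comp z)
    have hbm : b₂ ≫ m = 𝟙 X' := by
      have h1 := heuniq (b₂ ≫ m)
        ⟨by rw [Category.assoc, hm1, ht_inr], by
          simp only [Category.assoc, Category.id_comp] at hm2 ⊢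
          exact hm2⟩
      have h2 := heuniq (𝟙 X') ⟨Category.id_comp x, by rw [Category.comp_id, Category.id_comp]⟩
      exact h1.trans h2.symm
    -- the desired unique morphism
    refine ⟨a₂ ≫ m, ⟨?_, ?_⟩, ?_⟩
    · rw [Category.assoc, hm1, ht_inl]
    · rw [← Category.assoc, hPO.w, Category.assoc, hbm, Category.comp_id]
    · rintro u' ⟨hu'1, hu'2⟩
      have hdesc2 : y₀ ≫ u' = (w₀ ≫ v') ≫ 𝟙 X' := by rw [Category.comp_id, hu'2]
      obtain ⟨m', hm'a, hm'b⟩ :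
          ∃ m' : pushout y₀ (w₀ ≫ v') ⟶ X', a₂ ≫ m' = u' ∧ b₂ ≫ m' = 𝟙 X' :=
        ⟨hPO.desc u' (𝟙 X') hdesc2, hPO.inl_desc _ _ _, hPO.inr_desc _ _ _⟩
      have hm'm : m' = m := by
        refine hmuniq m' ⟨?_, ?_⟩
        · apply hPO.hom_ext
          · rw [← Category.assoc, hm'a, hu'1, ht_inl]
          · rw [← Category.assoc, hm'b, Category.id_comp, ht_inr]
        · simp only [Category.assoc, hm'b, Category.comp_id, Category.id_comp]
      rw [← hm'a, hm'm]
end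

section
/- Let C be an adhesive category. Let a : A ⟶ B be a monomorphism and b : A ⟶ D an arbitrary morphism, and let (c : B ⟶ C, d : D ⟶ C) be a pushout cocone exhibiting C as the pushout of the span (a, b). Then the pushout square is also a final pullback complement: (d, b) is a final pullback complement of (c, a). -/
open CategoryTheory CategoryTheory.Limits

universe v u


/-- In an adhesive category, every pushout square along a monomorphism is also a final
pullback complement square: if `(c, d)` is a pushout cocone of the span `(a, b)` with `a`
a monomorphism, then `(d, b)` is a final pullback complement of `(c, a)`. -/
theorem isFinalPullbackComplement_of_isPushout {𝒞 : Type u} [Category.{v} 𝒞] [Adhesive 𝒞]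
    {A B C D : 𝒞} (a : A ⟶ B) (b : A ⟶ D) (c : B ⟶ C) (d : D ⟶ C) [Mono a]
    (h : IsPushout a b c d) :
    IsFinalPullbackComplement a c b d := by
  have hd : Mono d := Adhesive.mono_of_isPushout_of_mono_left h
  refine ⟨Adhesive.isPullback_of_isPushout_of_mono_left h, ?_⟩
  intro P Q x y z hxy w hw
  -- P' := pullback of a along x
  let p₁ : pullback a x ⟶ A := pullback.fst a x
  let p₂ : pullback a x ⟶ P := pullback.snd a x
  have hP' : IsPullback p₁ p₂ a x := IsPullback.of_hasPullback a x
  -- R := pullback of d along z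
  let r₁ : pullback d z ⟶ D := pullback.fst d z
  let r₂ : pullback d z ⟶ Q := pullback.snd d z
  have hR : IsPullback r₁ r₂ d z := IsPullback.of_hasPullback d z
  -- the map P' ⟶ R
  have hcomm : (p₁ ≫ b) ≫ d = (p₂ ≫ y) ≫ z := by
    rw [Category.assoc, ← h.w, ← Category.assoc, hP'.w, Category.assoc, hxy.w, Category.assoc]
  let g' : pullback a x ⟶ pullback d z := pullback.lift (p₁ ≫ b) (p₂ ≫ y) hcomm
  have hg1 : g' ≫ r₁ = p₁ ≫ b := pullback.lift_fst _ _ _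
  have hg2 : g' ≫ r₂ = p₂ ≫ y := pullback.lift_snd _ _ _
  -- the left face of the cube is a pullback
  have hleft : IsPullback g' p₁ r₁ b := by
    refine IsPullback.of_right ?_ hg1 hR.flip
    rw [hg2, ← h.w]
    exact hP'.flip.paste_horiz hxy.flip
  -- van Kampen: the top face is a pushout
  have htop : IsPushout p₂ g' y r₂ :=
    ((Adhesive.van_kampen h) p₂ g' y r₂ p₁ x r₁ z hP'.flip hleft hxy.flip.toCommSq
      hR.flip.toCommSq ⟨hg2.symm⟩).mpr ⟨hxy.flip, hR.flip⟩
  have hpw : p₂ ≫ w = p₁ := by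
    rw [← cancel_mono a, Category.assoc, hw]
    exact hP'.w.symm
  have hdesc : p₂ ≫ w ≫ b = g' ≫ r₁ := by
    rw [← Category.assoc, hpw, hg1]
  refine ⟨htop.desc (w ≫ b) r₁ hdesc, ⟨?_, htop.inl_desc _ _ _⟩, ?_⟩
  · apply htop.hom_ext
    · rw [htop.inl_desc_assoc, Category.assoc, ← h.w, ← Category.assoc, hw]
      exact hxy.w
    · rw [htop.inr_desc_assoc]
      exact hR.w
  · rintro w' ⟨hw'd, hw'y⟩
    apply htop.hom_ext
    · rw [htop.inl_desc, hw'y]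
    · rw [htop.inr_desc, ← cancel_mono d, Category.assoc, hw'd]
      exact hR.w.symm
end

section
/- (Pushout–pullback decomposition in adhesive categories.) Let C be an adhesive category. Consider morphisms e : C ⟶ B, d : B ⟶ A, vertical morphisms a : A ⟶ A', b : B ⟶ B', c : C ⟶ C', and bottom morphisms d' : B' ⟶ A', e' : C' ⟶ B', with a ∘ d = d' ∘ b (left square) and b ∘ e = e' ∘ c (right square). If the outer pasted square (a ∘ d ∘ e = d' ∘ e' ∘ c) is a pushout, the left square is a pullback, d' is a monomorphism, and at least one of c and e is a monomorphism, then both the left square and the right square are pushouts (and hence also pullbacks). -/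
open CategoryTheory CategoryTheory.Limits

universe v u

/-- If `g` is a monomorphism, the square with top `f`, left `𝟙`, right `g`,
bottom `f ≫ g` is a pullback. -/
lemma isPullback_id_comp_of_mono_s15 {𝒞 : Type u} [Category.{v} 𝒞] {X Y Z : 𝒞}
    (f : X ⟶ Y) (g : Y ⟶ Z) [Mono g] : IsPullback f (𝟙 X) g (f ≫ g) := by
  refine IsPullback.of_isLimit (c := PullbackCone.mk f (𝟙 X) (by simp)) ?_
  refine PullbackCone.IsLimit.mk _ (fun s => s.snd) (fun s => ?_) (fun s => by simp)
    (fun s m _ hm => by simpa using hm)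
  have := s.condition
  rw [← cancel_mono g]
  simp only [Category.assoc]
  exact this.symm

/-- Pushout–pullback decomposition in an adhesive category: if the outer pasted square is
a pushout, the left square is a pullback, `d'` is a monomorphism, and at least one of
`c`, `e` is a monomorphism, then both the left and the right squares are pushouts (and
hence also pullbacks). -/
theorem pushout_pullback_decomposition {𝒞 : Type u} [Category.{v} 𝒞] [Adhesive 𝒞]
    {A B C A' B' C' : 𝒞}
    (e : C ⟶ B) (d : B ⟶ A) (a : A ⟶ A') (b : B ⟶ B') (c : C ⟶ C')
    (d' : B' ⟶ A') (e' : C' ⟶ B')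
    (hright : e ≫ b = c ≫ e')
    (houter : IsPushout (e ≫ d) c a (e' ≫ d'))
    (hleftPB : IsPullback d b a d')
    [Mono d'] (hmono : Mono c ∨ Mono e) :
    IsPushout d b a d' ∧ IsPushout e c b e' ∧
    IsPullback d b a d' ∧ IsPullback e c b e' := by
  -- `d` is a monomorphism, being a pullback of the monomorphism `d'`.
  haveI hd : Mono d := by
    have := PullbackCone.mono_fst_of_is_pullback_of_mono hleftPB.isLimit
    exact this
  -- The outer pushout is van Kampen (it is a pushout along a mono in either case).
  have vk : houter.IsVanKampen := by
    rcases hmono with hc | he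
    · exact Adhesive.van_kampen' houter
    · haveI := he
      haveI : Mono (e ≫ d) := mono_comp e d
      exact Adhesive.van_kampen houter
  -- Apply the van Kampen property to the cube whose top face is the right square.
  have key := vk e c b e' (𝟙 C) d (𝟙 C') d'
    (by simpa using isPullback_id_comp_of_mono_s15 e d)
    (IsPullback.of_vert_isIso ⟨by simp⟩)
    ⟨hleftPB.w.symm⟩
    ⟨by simp⟩
    ⟨hright⟩
  have hrightPO : IsPushout e c b e' :=
    key.mpr ⟨hleftPB.flip, by simpa using isPullback_id_comp_of_mono_s15 e' d'⟩
  -- The left square is a pushout by pasting cancellation.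
  have hleftPO : IsPushout d b a d' := houter.of_left hleftPB.w hrightPO
  -- The right square is a pullback since it is a pushout along a mono.
  have hrightPB : IsPullback e c b e' := by
    rcases hmono with hc | he
    · exact Adhesive.isPullback_of_isPushout_of_mono_right hrightPO
    · haveI := he
      exact Adhesive.isPullback_of_isPushout_of_mono_left hrightPO
  exact ⟨hleftPO, hrightPO, hleftPB, hrightPB⟩
end

section
/- (Pullback–pushout decomposition.) Let C be an adhesive category. Consider morphisms e : C ⟶ B, d : B ⟶ A, vertical morphisms a : A ⟶ A', b : B ⟶ B', c : C ⟶ C', and bottom morphisms d' : B' ⟶ A', e' : C' ⟶ B', with a ∘ d = d' ∘ b (left square) and b ∘ e = e' ∘ c (right square). If the outer pasted square (a ∘ d ∘ e = d' ∘ e' ∘ c) is a pullback, the right square is a pushout, and a is a monomorphism, then the left square is a pullback. -/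
open CategoryTheory CategoryTheory.Limits

universe v u

/-- Pullback–pushout decomposition in an adhesive category: if the outer pasted square is
a pullback, the right square is a pushout, the left square commutes and `a` is a
monomorphism, then the left square is a pullback. -/
theorem pullback_pushout_decomposition {𝒞 : Type u} [Category.{v} 𝒞] [Adhesive 𝒞]
    {A B C A' B' C' : 𝒞}
    (e : C ⟶ B) (d : B ⟶ A) (a : A ⟶ A') (b : B ⟶ B') (c : C ⟶ C')
    (d' : B' ⟶ A') (e' : C' ⟶ B')
    (hleft : d ≫ a = b ≫ d')
    (houter : IsPullback (e ≫ d) c a (e' ≫ d'))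
    (hright : IsPushout e c b e')
    [Mono a] :
    IsPullback d b a d' := by
  -- `c` is a monomorphism, being a pullback of the monomorphism `a`.
  haveI hc : Mono c := by
    constructor
    intro T u v huv
    apply houter.hom_ext
    · have w' : e ≫ d ≫ a = c ≫ e' ≫ d' := by simpa using houter.w
      rw [← cancel_mono a]
      simp only [Category.assoc, w']
      rw [reassoc_of% huv]
    · exact huv
  -- The pullback of `a` along `d'` and the comparison map `k`.
  have hP : IsPullback (pullback.fst a d') (pullback.snd a d') a d' :=
    IsPullback.of_hasPullback a d'
  set k : B ⟶ pullback a d' := pullback.lift d b hleft with hk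
  have hkfst : k ≫ pullback.fst a d' = d := pullback.lift_fst _ _ _
  have hksnd : k ≫ pullback.snd a d' = b := pullback.lift_snd _ _ _
  haveI : Mono (pullback.snd a d') := pullback.snd_of_mono
  -- Front-right face of the cube is a pullback, by pasting.
  have hfr : IsPullback (e ≫ k) c (pullback.snd a d') e' := by
    refine IsPullback.of_right ?_ ?_ hP
    · have : (e ≫ k) ≫ pullback.fst a d' = e ≫ d := by rw [Category.assoc, hkfst]
      rw [this]; exact houter
    · rw [Category.assoc, hksnd]; exact hright.w
  -- Front-left face of the cube is a pullback, since `pullback.snd a d'` is mono.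
  have hfl : IsPullback k (𝟙 B) (pullback.snd a d') b := by
    refine IsPullback.of_isLimit' ⟨by rw [hksnd, Category.id_comp]⟩ ?_
    refine PullbackCone.IsLimit.mk _ (fun s => s.snd) (fun s => ?_) (fun s => ?_) ?_
    · rw [← cancel_mono (pullback.snd a d'), Category.assoc, hksnd, ← s.condition]
    · exact Category.comp_id _
    · intro s m _ h2
      simpa using h2
  -- Apply the van Kampen property of the pushout `hright` (along the mono `c`).
  have vk := (Adhesive.van_kampen' hright) e (𝟙 C) k (e ≫ k) (𝟙 C) (𝟙 B) c
      (pullback.snd a d')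
      (IsPullback.of_vert_isIso ⟨by simp⟩)
      (IsKernelPair.id_of_mono c)
      ⟨by rw [hksnd, Category.id_comp]⟩
      ⟨hfr.w⟩
      ⟨by rw [Category.id_comp]⟩
  have hpo : IsPushout e (𝟙 C) k (e ≫ k) := vk.mpr ⟨hfl, hfr⟩
  -- Hence `k` is an isomorphism.
  have hpo' : IsPushout e (𝟙 C) (𝟙 B) e := IsPushout.of_id_snd
  haveI : IsIso k := by
    have h1 := hpo'.isColimit.comp_coconePointUniqueUpToIso_hom hpo.isColimit WalkingSpan.left
    have h2 : k = (hpo'.isColimit.coconePointUniqueUpToIso hpo.isColimit).hom := by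
      exact h1.symm.trans (Category.id_comp _)
    rw [h2]; exact Iso.isIso_hom _
  -- Transfer the pullback square along the isomorphism `k`.
  exact hP.of_iso (asIso k).symm (Iso.refl _) (Iso.refl _) (Iso.refl _)
    (by simp [IsIso.eq_inv_comp, hkfst]) (by simp [IsIso.eq_inv_comp, hksnd])
    (by simp) (by simp)
end

section
/- (Uniqueness of pushout complements along monomorphisms.) Let C be an adhesive category, let m : A ⟶ C be a monomorphism and g : C ⟶ D an arbitrary morphism. Suppose (f₁ : A ⟶ B₁, h₁ : B₁ ⟶ D) and (f₂ : A ⟶ B₂, h₂ : B₂ ⟶ D) are both pushout complements of (m, g), i.e. for i = 1, 2 the square g ∘ m = h_i ∘ f_i is a pushout (D is a pushout of the span (m : A ⟶ C, f_i : A ⟶ B_i) with cocone (g, h_i)). Then there exists an isomorphism φ : B₁ ≅ B₂ with φ ∘ f₁ = f₂ and h₂ ∘ φ = h₁. -/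
open CategoryTheory CategoryTheory.Limits

universe v u

/-- If `(𝟙 X, t, a, b)` is a pushout square, then `b` is an isomorphism. -/
lemma isIso_of_isPushout_id {𝒞 : Type u} [Category.{v} 𝒞] {X Y Z : 𝒞}
    {t : X ⟶ Y} {a : X ⟶ Z} {b : Y ⟶ Z} (h : IsPushout (𝟙 X) t a b) : IsIso b := by
  refine ⟨h.desc t (𝟙 Y) (by simp), h.inr_desc _ _ _, ?_⟩
  · apply h.hom_ext
    · rw [← Category.assoc, h.inl_desc]
      simpa using h.w.symm
    · rw [← Category.assoc, h.inr_desc]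
      simp

/-- Uniqueness of pushout complements along monomorphisms in an adhesive category: if
`(f₁, h₁)` and `(f₂, h₂)` are both pushout complements of `(m, g)` with `m` a
monomorphism, then there is an isomorphism `φ : B₁ ≅ B₂` compatible with the data. -/
theorem pushout_complement_unique {𝒞 : Type u} [Category.{v} 𝒞] [Adhesive 𝒞]
    {A C D B₁ B₂ : 𝒞} (m : A ⟶ C) [Mono m] (g : C ⟶ D)
    (f₁ : A ⟶ B₁) (h₁ : B₁ ⟶ D) (f₂ : A ⟶ B₂) (h₂ : B₂ ⟶ D)
    (hpo₁ : IsPushout m f₁ g h₁) (hpo₂ : IsPushout m f₂ g h₂) :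
    ∃ φ : B₁ ≅ B₂, f₁ ≫ φ.hom = f₂ ∧ φ.hom ≫ h₂ = h₁ := by
  -- both pushout squares are also pullback squares
  have hpb₁ : IsPullback m f₁ g h₁ := Adhesive.isPullback_of_isPushout_of_mono_left hpo₁
  have hpb₂ : IsPullback m f₂ g h₂ := Adhesive.isPullback_of_isPushout_of_mono_left hpo₂
  -- `h₁` and `h₂` are monomorphisms
  have mono_h₁ : Mono h₁ := Adhesive.mono_of_isPushout_of_mono_left hpo₁
  have mono_h₂ : Mono h₂ := Adhesive.mono_of_isPushout_of_mono_left hpo₂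
  -- form the pullback `P = B₁ ×_D B₂`
  have : HasPullback h₁ h₂ := Adhesive.hasPullback_of_mono_left h₁ h₂
  obtain ⟨P, p₁, p₂, hP⟩ :
      ∃ (P : 𝒞) (p₁ : P ⟶ B₁) (p₂ : P ⟶ B₂), IsPullback p₁ p₂ h₁ h₂ :=
    ⟨pullback h₁ h₂, pullback.fst h₁ h₂, pullback.snd h₁ h₂, IsPullback.of_hasPullback h₁ h₂⟩
  have hw : f₁ ≫ h₁ = f₂ ≫ h₂ := by rw [← hpo₁.w, ← hpo₂.w]
  obtain ⟨t, ht₁, ht₂⟩ : ∃ t : A ⟶ P, t ≫ p₁ = f₁ ∧ t ≫ p₂ = f₂ :=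
    ⟨hP.lift f₁ f₂ hw, hP.lift_fst _ _ _, hP.lift_snd _ _ _⟩
  -- the square `(t, 𝟙 A, p₁, f₁)` is a pullback
  have T₁ : IsPullback t (𝟙 A) p₁ f₁ := by
    refine IsPullback.of_isLimit
      (PullbackCone.IsLimit.mk (by simp [ht₁]) (fun s => s.snd) ?_ (fun s => by simp) ?_)
    · intro s
      apply hP.hom_ext
      · rw [Category.assoc, ht₁]
        exact s.condition.symm
      · rw [Category.assoc, ht₂, ← cancel_mono h₂, Category.assoc, Category.assoc,
          ← hw, ← Category.assoc, ← s.condition, Category.assoc, hP.w]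
    · intro s mm _ h2
      simpa using h2
  -- the square `(t, 𝟙 A, p₂, f₂)` is a pullback
  have T₂ : IsPullback t (𝟙 A) p₂ f₂ := by
    refine IsPullback.of_isLimit
      (PullbackCone.IsLimit.mk (by simp [ht₂]) (fun s => s.snd) ?_ (fun s => by simp) ?_)
    · intro s
      apply hP.hom_ext
      · rw [Category.assoc, ht₁, ← cancel_mono h₁, Category.assoc, Category.assoc,
          hw, ← Category.assoc, ← s.condition, Category.assoc, ← hP.w]
      · rw [Category.assoc, ht₂]
        exact s.condition.symm
    · intro s mm _ h2
      simpa using h2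
  -- the trivial pullback square on identities
  have Tid : IsPullback (𝟙 A) (𝟙 A) m m := IsKernelPair.id_of_mono m
  -- use the van Kampen property of the second pushout square
  have vk₂ := Adhesive.van_kampen (f := m) hpo₂
  have po₁ : IsPushout (𝟙 A) t f₁ p₁ :=
    (vk₂ (𝟙 A) t f₁ p₁ (𝟙 A) m p₂ h₁ Tid T₂ ⟨hpo₁.w.symm⟩ hP.toCommSq
      ⟨by simp [ht₁]⟩).mpr ⟨hpb₁.flip, hP⟩
  -- use the van Kampen property of the first pushout square
  have vk₁ := Adhesive.van_kampen (f := m) hpo₁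
  have po₂ : IsPushout (𝟙 A) t f₂ p₂ :=
    (vk₁ (𝟙 A) t f₂ p₂ (𝟙 A) m p₁ h₂ Tid T₁ ⟨hpo₂.w.symm⟩ hP.flip.toCommSq
      ⟨by simp [ht₂]⟩).mpr ⟨hpb₂.flip, hP.flip⟩
  have i₁ : IsIso p₁ := isIso_of_isPushout_id po₁
  have i₂ : IsIso p₂ := isIso_of_isPushout_id po₂
  refine ⟨(asIso p₁).symm ≪≫ asIso p₂, ?_, ?_⟩
  · show f₁ ≫ inv p₁ ≫ p₂ = f₂
    rw [← ht₁, Category.assoc, IsIso.hom_inv_id_assoc, ht₂]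
  · show (inv p₁ ≫ p₂) ≫ h₂ = h₁
    rw [Category.assoc, ← hP.w, IsIso.inv_hom_id_assoc]
end
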